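/- Let F = [[1,1],[1,0]] and C = [[1,1,1],[1,1,1],[1,0,1]]. Then there is no group isomorphism φ : ℤ^3/(I−F_1)ℤ^3 → ℤ^4/(I−C_1)ℤ^4 such that φ([(1,0,0)]) = [(1,0,0,0)] and φ([(1,1,1)]) = [(1,1,1,1)]. -/

import Mathlib

open Matrix

noncomputable section

/-- `A` has entries in `{0,1}`. -/
def ZeroOneEntries {N : ℕ} (A : Matrix (Fin N) (Fin N) ℤ) : Prop :=
  ∀ i j, A i j = 0 ∨ A i j = 1

/-- `A` is irreducible: for all `i j` there is `m ≥ 1` with `(A^m) i j ≥ 1`. -/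
def IsIrreducibleMatrix {N : ℕ} (A : Matrix (Fin N) (Fin N) ℤ) : Prop :=
  ∀ i j, ∃ m : ℕ, 1 ≤ m ∧ 1 ≤ (A ^ m) i j

/-- `A` is a permutation matrix: every row and column has exactly one nonzero entry. -/
def IsPermutationMatrix {N : ℕ} (A : Matrix (Fin N) (Fin N) ℤ) : Prop :=
  (∀ i, ∃! j, A i j ≠ 0) ∧ (∀ j, ∃! i, A i j ≠ 0)

/-- The matrix `R₁` whose first row is `(1,…,1)` and whose other rows vanish. -/
def R1 (N : ℕ) [NeZero N] : Matrix (Fin N) (Fin N) ℤ :=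
  Matrix.of fun i _ => if i = 0 then 1 else 0

/-- `Â = A + R₁ - A·R₁`. -/
def Ahat {N : ℕ} [NeZero N] (A : Matrix (Fin N) (Fin N) ℤ) : Matrix (Fin N) (Fin N) ℤ :=
  A + R1 N - A * R1 N

/-- The subgroup `Mℤ^N = {Mx : x ∈ ℤ^N}` of `ℤ^N`. -/
abbrev colSpan {N : ℕ} (M : Matrix (Fin N) (Fin N) ℤ) : Submodule ℤ (Fin N → ℤ) :=
  LinearMap.range M.mulVecLin

/-- The quotient group `ℤ^N / Mℤ^N`. -/
abbrev MQuot {N : ℕ} (M : Matrix (Fin N) (Fin N) ℤ) := (Fin N → ℤ) ⧸ colSpan M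

/-- `s_A : ℤ^N → ℤ`, sum of coordinates. -/
def sA (N : ℕ) : (Fin N → ℤ) →ₗ[ℤ] ℤ := ∑ i : Fin N, LinearMap.proj i

lemma sA_apply {N : ℕ} (x : Fin N → ℤ) : sA N x = ∑ i, x i := by
  simp [sA]

/-- `e₁ = (1,0,…,0) ∈ ℤ^N`. -/
def e1 (N : ℕ) [NeZero N] : Fin N → ℤ := Pi.single 0 1

/-- `i₁ : ℤ → ℤ^N`, `m ↦ (m,0,…,0)`. -/
def i1 (N : ℕ) [NeZero N] : ℤ →ₗ[ℤ] (Fin N → ℤ) :=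
  LinearMap.toSpanSingleton ℤ _ (e1 N)

/-- `j_A : ℤ^N → ℤ^N`,
`(l₁,…,l_N) ↦ (-∑_{i=2}^N l_i, l₂, …, l_N)`. -/
def jA (N : ℕ) [NeZero N] : (Fin N → ℤ) →ₗ[ℤ] (Fin N → ℤ) where
  toFun l := fun i => if i = 0 then -∑ k ∈ Finset.univ.erase 0, l k else l i
  map_add' a b := by
    funext i
    by_cases h : i = 0
    · simp only [h, reduceIte, Pi.add_apply, Finset.sum_add_distrib]
      ring
    · simp [h]
  map_smul' c a := by
    funext i
    by_cases h : i = 0 <;>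
      simp [h, Finset.mul_sum, smul_eq_mul, mul_neg, mul_sub]

/-- The matrix `A₁` of size `N+1`, with first row `(1,…,1)`, first column `(1,0,…,0)ᵗ`,
and lower-right `N×N` block `A`. -/
def A1 {N : ℕ} (A : Matrix (Fin N) (Fin N) ℤ) : Matrix (Fin (N+1)) (Fin (N+1)) ℤ :=
  Matrix.of fun i j =>
    Fin.cases 1 (fun i' => Fin.cases 0 (fun j' => A i' j') j) i

/-- `ℤ^N → ℤ^{N+1}`, `x ↦ (0, x)`. -/
def ext0 {N : ℕ} : (Fin N → ℤ) →ₗ[ℤ] (Fin (N+1) → ℤ) where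
  toFun x := Fin.cons 0 x
  map_add' a b := by
    funext i
    refine Fin.cases ?_ (fun i' => ?_) i <;> simp
  map_smul' c a := by
    funext i
    refine Fin.cases ?_ (fun i' => ?_) i <;> simp

/-- `ℤ^{N+1} → ℤ^N`, deleting the first coordinate. -/
def tailL {N : ℕ} : (Fin (N+1) → ℤ) →ₗ[ℤ] (Fin N → ℤ) :=
  LinearMap.funLeft ℤ ℤ Fin.succ

lemma sA_e1 {N : ℕ} [NeZero N] : sA N (e1 N) = 1 := by
  simp [sA_apply, e1, Pi.single_apply]

lemma R1_mulVec {N : ℕ} [NeZero N] (x : Fin N → ℤ) :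
    (R1 N).mulVec x = (sA N x) • e1 N := by
  funext i
  by_cases h : i = 0 <;>
    simp [R1, e1, Matrix.mulVec, dotProduct, sA_apply, Pi.single_apply, h]

lemma jA_eq' {N : ℕ} [NeZero N] (x : Fin N → ℤ) :
    jA N x = x - (sA N x) • e1 N := by
  funext i
  by_cases h : i = 0
  · subst h
    simp only [jA, LinearMap.coe_mk, AddHom.coe_mk, reduceIte, Pi.sub_apply, Pi.smul_apply,
      smul_eq_mul, sA_apply, e1, Pi.single_eq_same, mul_one]
    rw [← Finset.add_sum_erase _ x (Finset.mem_univ 0)]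
    ring
  · simp [jA, e1, Pi.single_apply, h]

lemma jA_eq_mulVec {N : ℕ} [NeZero N] (x : Fin N → ℤ) :
    jA N x = (1 - R1 N).mulVec x := by
  rw [jA_eq', Matrix.sub_mulVec, Matrix.one_mulVec, R1_mulVec]

lemma one_sub_Ahat {N : ℕ} [NeZero N] (A : Matrix (Fin N) (Fin N) ℤ) :
    1 - Ahat A = (1 - A) * (1 - R1 N) := by
  unfold Ahat
  noncomm_ring

lemma colSpan_Ahat_le {N : ℕ} [NeZero N] (A : Matrix (Fin N) (Fin N) ℤ) :
    colSpan (1 - Ahat A) ≤ colSpan (1 - A) := by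
  rintro _ ⟨x, rfl⟩
  refine ⟨(1 - R1 N).mulVec x, ?_⟩
  rw [mulVecLin_apply, mulVecLin_apply, one_sub_Ahat, ← Matrix.mulVec_mulVec]

/-- `q̂_A : ℤ^N/(I-Â)ℤ^N → ℤ^N/(I-A)ℤ^N`, induced by the identity map of `ℤ^N`. -/
def qHat {N : ℕ} [NeZero N] (A : Matrix (Fin N) (Fin N) ℤ) :
    MQuot (1 - Ahat A) →ₗ[ℤ] MQuot (1 - A) :=
  Submodule.liftQ _ (colSpan (1 - A)).mkQ
    (by simpa [Submodule.ker_mkQ] using colSpan_Ahat_le A)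

/-- `ι̂_A : ℤ → ℤ^N/(I-Â)ℤ^N`, `m ↦ [(I-A)(m·e₁)]`. -/
def iotaHat {N : ℕ} [NeZero N] (A : Matrix (Fin N) (Fin N) ℤ) :
    ℤ →ₗ[ℤ] MQuot (1 - Ahat A) :=
  (colSpan (1 - Ahat A)).mkQ ∘ₗ (1 - A).mulVecLin ∘ₗ i1 N

lemma e1_mem_kerHat {N : ℕ} [NeZero N] (A : Matrix (Fin N) (Fin N) ℤ) :
    e1 N ∈ LinearMap.ker (1 - Ahat A).mulVecLin := by
  rw [LinearMap.mem_ker, mulVecLin_apply, one_sub_Ahat, ← Matrix.mulVec_mulVec]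
  have : (1 - R1 N).mulVec (e1 N) = 0 := by
    rw [Matrix.sub_mulVec, Matrix.one_mulVec, R1_mulVec, sA_e1, one_smul, sub_self]
  rw [this, Matrix.mulVec_zero]

lemma jA_mem_ker {N : ℕ} [NeZero N] (A : Matrix (Fin N) (Fin N) ℤ) (x : Fin N → ℤ)
    (hx : x ∈ LinearMap.ker (1 - Ahat A).mulVecLin) :
    jA N x ∈ LinearMap.ker (1 - A).mulVecLin := by
  rw [LinearMap.mem_ker, mulVecLin_apply] at *
  rw [jA_eq_mulVec, Matrix.mulVec_mulVec, ← one_sub_Ahat]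
  exact hx

lemma sA_jA {N : ℕ} [NeZero N] (x : Fin N → ℤ) : sA N (jA N x) = 0 := by
  rw [jA_eq', map_sub, LinearMap.map_smul, sA_e1, smul_eq_mul, mul_one, sub_self]

lemma jA_e1 {N : ℕ} [NeZero N] : jA N (e1 N) = 0 := by
  rw [jA_eq', sA_e1, one_smul, sub_self]

lemma tailL_key {N : ℕ} (A : Matrix (Fin N) (Fin N) ℤ) (x : Fin (N+1) → ℤ) :
    tailL ((1 - A1 A).mulVec x) = (1 - A).mulVec (tailL x) := by
  funext i
  simp only [tailL, LinearMap.funLeft_apply, Function.comp, Matrix.mulVec, dotProduct,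
    Matrix.sub_apply, Matrix.one_apply, A1, Matrix.of_apply, Fin.cases_succ,
    sub_mul, Finset.sum_sub_distrib]
  congr 1
  · rw [Fin.sum_univ_succ]
    simp [Fin.succ_ne_zero, Fin.succ_inj]
  · rw [Fin.sum_univ_succ]
    simp

/-- `ι_{A₁} : ℤ → ℤ^{N+1}/(I-A₁)ℤ^{N+1}`, `m ↦ [(0, (I-A)(m·e₁))]`. -/
def iotaA1 {N : ℕ} [NeZero N] (A : Matrix (Fin N) (Fin N) ℤ) :
    ℤ →ₗ[ℤ] MQuot (1 - A1 A) :=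
  (colSpan (1 - A1 A)).mkQ ∘ₗ ext0 ∘ₗ (1 - A).mulVecLin ∘ₗ i1 N

/-- `q_{A₁} : ℤ^{N+1}/(I-A₁)ℤ^{N+1} → ℤ^N/(I-A)ℤ^N`, induced by deleting the
first coordinate. -/
def qA1 {N : ℕ} (A : Matrix (Fin N) (Fin N) ℤ) :
    MQuot (1 - A1 A) →ₗ[ℤ] MQuot (1 - A) :=
  Submodule.liftQ _ ((colSpan (1 - A)).mkQ ∘ₗ tailL) (by
    rintro _ ⟨x, rfl⟩
    simp only [LinearMap.mem_ker, LinearMap.comp_apply, mulVecLin_apply]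
    rw [tailL_key]
    exact (Submodule.Quotient.mk_eq_zero _).2 ⟨tailL x, rfl⟩)


/-- For `F = [[1,1],[1,0]]` and `C = [[1,1,1],[1,1,1],[1,0,1]]`, there is no group
isomorphism `ℤ³/(I-F₁)ℤ³ → ℤ⁴/(I-C₁)ℤ⁴` sending `[(1,0,0)]` to `[(1,0,0,0)]` and
`[(1,1,1)]` to `[(1,1,1,1)]`. -/
lemma A1_F : A1 !![1, 1; 1, (0 : ℤ)] = !![1,1,1; 0,1,1; 0,1,0] := by
  funext i j; fin_cases i <;> fin_cases j <;> rfl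

lemma A1_C : A1 !![1, 1, 1; 1, 1, 1; 1, 0, (1 : ℤ)] =
    !![1,1,1,1; 0,1,1,1; 0,1,1,1; 0,1,0,1] := by
  funext i j; fin_cases i <;> fin_cases j <;> rfl

theorem stmt13 :
    ¬ ∃ φ : MQuot (1 - A1 !![1, 1; 1, (0 : ℤ)]) ≃+
            MQuot (1 - A1 !![1, 1, 1; 1, 1, 1; 1, 0, (1 : ℤ)]),
      φ (Submodule.Quotient.mk ![1, 0, 0]) = Submodule.Quotient.mk ![1, 0, 0, 0] ∧
      φ (Submodule.Quotient.mk ![1, 1, 1]) = Submodule.Quotient.mk ![1, 1, 1, 1] := by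
  rintro ⟨φ, h1, h2⟩
  -- In the source, [(3,1,1)] = 0 since (3,1,1) = (I-F₁)·(0,-2,-1).
  have hz : (Submodule.Quotient.mk ![3, 1, 1] :
      MQuot (1 - A1 !![1, 1; 1, (0 : ℤ)])) = 0 := by
    rw [Submodule.Quotient.mk_eq_zero]
    refine ⟨![0, -2, -1], ?_⟩
    funext i
    fin_cases i <;>
      simp [Matrix.mulVecLin_apply, Matrix.mulVec, dotProduct, Fin.sum_univ_three, A1_F,
        Matrix.one_apply, Fin.ext_iff]
  -- ![3,1,1] = 2 • ![1,0,0] + ![1,1,1]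
  have hsum : (Submodule.Quotient.mk ![3, 1, 1] :
      MQuot (1 - A1 !![1, 1; 1, (0 : ℤ)])) =
      (2 : ℤ) • Submodule.Quotient.mk ![1, 0, 0] + Submodule.Quotient.mk ![1, 1, 1] := by
    rw [← Submodule.Quotient.mk_smul, ← Submodule.Quotient.mk_add]
    congr 1
    funext i
    fin_cases i <;> simp
  have hphi : φ (Submodule.Quotient.mk ![3, 1, 1]) =
      (Submodule.Quotient.mk ![3, 1, 1, 1] :
        MQuot (1 - A1 !![1, 1, 1; 1, 1, 1; 1, 0, (1 : ℤ)])) := by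
    rw [hsum]
    have : ((2 : ℤ) • Submodule.Quotient.mk ![1, 0, 0] + Submodule.Quotient.mk ![1, 1, 1] :
        MQuot (1 - A1 !![1, 1; 1, (0 : ℤ)])) =
        Submodule.Quotient.mk ![1, 0, 0] + Submodule.Quotient.mk ![1, 0, 0] +
          Submodule.Quotient.mk ![1, 1, 1] := by
      rw [two_smul]
    rw [this, map_add, map_add, h1, h2]
    rw [← Submodule.Quotient.mk_add, ← Submodule.Quotient.mk_add]
    congr 1
    funext i
    fin_cases i <;> simp
  have hz4 : (Submodule.Quotient.mk ![3, 1, 1, 1] :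
      MQuot (1 - A1 !![1, 1, 1; 1, 1, 1; 1, 0, (1 : ℤ)])) = 0 := by
    rw [← hphi, hz, map_zero]
  rw [Submodule.Quotient.mk_eq_zero] at hz4
  obtain ⟨y, hy⟩ := hz4
  -- Apply the functional g(x) = x 0 - x 1 - x 3, which kills the column span.
  have hM : (1 : Matrix (Fin 4) (Fin 4) ℤ) - A1 !![1, 1, 1; 1, 1, 1; 1, 0, (1 : ℤ)] =
      !![0,-1,-1,-1; 0,0,-1,-1; 0,-1,0,-1; 0,-1,0,0] := by
    rw [A1_C]
    funext i j
    fin_cases i <;> fin_cases j <;> rfl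
  rw [hM] at hy
  have h0 := congrFun hy 0
  have h1' := congrFun hy 1
  have h3 := congrFun hy 3
  simp only [Matrix.mulVecLin_apply, Matrix.mulVec_cons, Matrix.cons_mulVec,
    Matrix.cons_dotProduct, Matrix.dotProduct_of_isEmpty, Matrix.cons_val_zero, Matrix.cons_val_one,
    Matrix.head_cons, Matrix.cons_val', Matrix.empty_val', Matrix.cons_val_fin_one] at h0 h1' h3
  norm_num [Fin.sum_univ_four, Matrix.vecHead, Matrix.vecTail, dotProduct,
    Fin.ext_iff] at h0 h1' h3
  simp at h3
  omega

end
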